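/- Suppose λ > 0, λ̂ > 0, and let μ ∈ (0, 1] satisfy μ ≤ λ̃/λ. Then μ √(σ_N/σ_{p+1}) · λ ≤ λ̂ ≤ λ, and consequently √(λ² − λ̂²) ≤ √(1 − (σ_N/σ_{p+1}) μ²) · λ. -/

import Mathlib

open Matrix


lemma aux_mulVec_inj {n N : ℕ} {P : Matrix (Fin n) (Fin N) ℝ} (hP : P.rank = N)
    (x : Fin N → ℝ) (hx : P *ᵥ x = 0) : x = 0 := by
  have h1 := LinearMap.finrank_range_add_finrank_ker P.mulVecLin
  rw [Matrix.rank] at hP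
  rw [hP, Module.finrank_fin_fun] at h1
  have hker : LinearMap.ker P.mulVecLin = ⊥ :=
    Submodule.finrank_eq_zero.mp (by omega)
  have : x ∈ LinearMap.ker P.mulVecLin := by
    simpa [Matrix.mulVecLin_apply] using hx
  simpa [hker] using this

lemma aux_spectral {N : ℕ} {M : Matrix (Fin N) (Fin N) ℝ} {u : Fin N → Fin N → ℝ}
    {d : Fin N → ℝ}
    (hortho : ∀ i j, u i ⬝ᵥ u j = if i = j then (1:ℝ) else 0)
    (heig : ∀ i, M *ᵥ u i = d i • u i) :
    M = (Matrix.of u)ᵀ * Matrix.diagonal d * Matrix.of u := by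
  set R := Matrix.of u with hR
  have hRR : R * Rᵀ = 1 := by
    ext i j
    simpa [hR, Matrix.mul_apply, Matrix.one_apply, dotProduct] using hortho i j
  have hRtR : Rᵀ * R = 1 := mul_eq_one_comm.mp hRR
  have hMR : M * Rᵀ = Rᵀ * Matrix.diagonal d := by
    ext i j
    have h := congrFun (heig j) i
    simp only [Matrix.mulVec, dotProduct, Pi.smul_apply, smul_eq_mul] at h
    rw [Matrix.mul_diagonal]
    simp only [Matrix.mul_apply, Matrix.transpose_apply, hR, Matrix.of_apply]
    rw [h]; ring
  calc M = M * (Rᵀ * R) := by rw [hRtR, Matrix.mul_one]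
    _ = (M * Rᵀ) * R := by rw [Matrix.mul_assoc]
    _ = Rᵀ * Matrix.diagonal d * R := by rw [hMR]

lemma aux_inv {N : ℕ} {R : Matrix (Fin N) (Fin N) ℝ} (hRR : R * Rᵀ = 1)
    {d : Fin N → ℝ} (hd : ∀ i, d i ≠ 0) :
    (Rᵀ * Matrix.diagonal d * R)⁻¹ = Rᵀ * Matrix.diagonal (fun i => (d i)⁻¹) * R := by
  have hRtR : Rᵀ * R = 1 := mul_eq_one_comm.mp hRR
  apply Matrix.inv_eq_right_inv
  calc Rᵀ * Matrix.diagonal d * R * (Rᵀ * Matrix.diagonal (fun i => (d i)⁻¹) * R)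
      = Rᵀ * Matrix.diagonal d * (R * Rᵀ) * Matrix.diagonal (fun i => (d i)⁻¹) * R := by
        simp only [Matrix.mul_assoc]
    _ = Rᵀ * (Matrix.diagonal d * Matrix.diagonal (fun i => (d i)⁻¹)) * R := by
        rw [hRR]; simp only [Matrix.mul_one, Matrix.mul_assoc]
    _ = 1 := by
        rw [Matrix.diagonal_mul_diagonal]
        have : (fun i => d i * (d i)⁻¹) = fun _ => (1:ℝ) := by
          funext i; exact mul_inv_cancel₀ (hd i)
        rw [this, Matrix.diagonal_one, Matrix.mul_one, hRtR]

lemma aux_quadform {N : ℕ} (R : Matrix (Fin N) (Fin N) ℝ) (e : Fin N → ℝ) (v : Fin N → ℝ) :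
    v ⬝ᵥ ((Rᵀ * Matrix.diagonal e * R) *ᵥ v) = ∑ i, e i * ((R *ᵥ v) i)^2 := by
  rw [← Matrix.mulVec_mulVec, ← Matrix.mulVec_mulVec, Matrix.dotProduct_mulVec,
    Matrix.vecMul_transpose]
  simp only [dotProduct, Matrix.mulVec_diagonal]
  apply Finset.sum_congr rfl
  intro i _
  ring

lemma aux_proj {n N : ℕ} {H : Matrix (Fin n) (Fin n) ℝ} (hH : H.PosDef)
    {P : Matrix (Fin n) (Fin N) ℝ} (hHr : (Pᵀ * H * P).PosDef) (g : Fin n → ℝ) :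
    (Pᵀ *ᵥ g) ⬝ᵥ ((Pᵀ * H * P)⁻¹ *ᵥ (Pᵀ *ᵥ g)) ≤ g ⬝ᵥ (H⁻¹ *ᵥ g) := by
  set Hr := Pᵀ * H * P with hHrdef
  set v := Pᵀ *ᵥ g with hv
  set y := Hr⁻¹ *ᵥ v with hy
  set w := H⁻¹ *ᵥ g - P *ᵥ y with hw
  have hHdet : IsUnit H.det := isUnit_iff_ne_zero.mpr hH.det_pos.ne'
  have hHrdet : IsUnit Hr.det := isUnit_iff_ne_zero.mpr hHr.det_pos.ne'
  have hHsymm : Hᵀ = H := by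
    have := hH.isHermitian
    rwa [Matrix.IsHermitian, Matrix.conjTranspose_eq_transpose_of_trivial] at this
  have e1 : H *ᵥ (H⁻¹ *ᵥ g) = g := by
    rw [Matrix.mulVec_mulVec, Matrix.mul_nonsing_inv _ hHdet, Matrix.one_mulVec]
  have e2 : Hr *ᵥ y = v := by
    rw [hy, Matrix.mulVec_mulVec, Matrix.mul_nonsing_inv _ hHrdet, Matrix.one_mulVec]
  have h0 : 0 ≤ w ⬝ᵥ (H *ᵥ w) := by
    have := hH.posSemidef.dotProduct_mulVec_nonneg w
    simpa using this
  have ca : g ⬝ᵥ (P *ᵥ y) = v ⬝ᵥ y := by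
    rw [Matrix.dotProduct_mulVec, hv, ← Matrix.mulVec_transpose]
  have cc : (P *ᵥ y) ⬝ᵥ (H *ᵥ (P *ᵥ y)) = v ⬝ᵥ y := by
    have : Hr *ᵥ y = Pᵀ *ᵥ (H *ᵥ (P *ᵥ y)) := by
      rw [hHrdef, ← Matrix.mulVec_mulVec, ← Matrix.mulVec_mulVec]
    have h1 : y ⬝ᵥ (Pᵀ *ᵥ (H *ᵥ (P *ᵥ y))) = v ⬝ᵥ y := by
      rw [← this, e2, dotProduct_comm]
    rw [← h1, Matrix.dotProduct_mulVec y, Matrix.vecMul_transpose]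
  have ct2 : (H⁻¹ *ᵥ g) ⬝ᵥ (H *ᵥ (P *ᵥ y)) = v ⬝ᵥ y := by
    have hx : (H⁻¹ *ᵥ g) ᵥ* H = g := by
      rw [← Matrix.mulVec_transpose, hHsymm]; exact e1
    rw [Matrix.dotProduct_mulVec, hx, ca]
  have expand : w ⬝ᵥ (H *ᵥ w) = g ⬝ᵥ (H⁻¹ *ᵥ g) - v ⬝ᵥ y := by
    rw [hw, Matrix.mulVec_sub, sub_dotProduct, dotProduct_sub,
      dotProduct_sub, e1]
    rw [ct2, cc, dotProduct_comm (H⁻¹ *ᵥ g) g]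
    have cb : (P *ᵥ y) ⬝ᵥ g = v ⬝ᵥ y := by rw [dotProduct_comm, ca]
    rw [cb]; ring
  have : v ⬝ᵥ y = v ⬝ᵥ (Hr⁻¹ *ᵥ v) := by rw [hy]
  linarith [expand ▸ h0]

set_option maxHeartbeats 1000000 in
/-- Suppose `λ > 0`, `λ̂ > 0`, and `μ ∈ (0, 1]` satisfies
`μ ≤ λ̃/λ`.  Then `μ √(σ_N/σ_{p+1}) · λ ≤ λ̂ ≤ λ`, and consequently
`√(λ² − λ̂²) ≤ √(1 − (σ_N/σ_{p+1}) μ²) · λ`, where `λ = (gᵀ H⁻¹ g)^{1/2}`,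
`λ̃ = (gᵀ P H_r⁻¹ Pᵀ g)^{1/2}`, `λ̂ = (gᵀ P Q⁻¹ Pᵀ g)^{1/2}`, and `Q` is the
coarse truncated approximation of `H_r := Pᵀ H P`. -/
theorem stmt8 {n N p : ℕ} (hp : 1 ≤ p) (hpN : p < N) (hNn : N < n)
    (H : Matrix (Fin n) (Fin n) ℝ) (hH : H.PosDef)
    (P : Matrix (Fin n) (Fin N) ℝ) (hP : P.rank = N)
    (σ : Fin N → ℝ) (u : Fin N → Fin N → ℝ)
    (hσpos : ∀ i, 0 < σ i)
    (hσmono : ∀ i j : Fin N, i ≤ j → σ j ≤ σ i)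
    (hortho : ∀ i j : Fin N, u i ⬝ᵥ u j = if i = j then (1 : ℝ) else 0)
    (hHreig : ∀ i, (Pᵀ * H * P) *ᵥ u i = σ i • u i)
    (Q : Matrix (Fin N) (Fin N) ℝ) (hQsymm : Q.IsSymm)
    (hQeig : ∀ i : Fin N, Q *ᵥ u i = (if (i : ℕ) < p then σ i else σ ⟨p, hpN⟩) • u i)
    (g : Fin n → ℝ)
    (lam lamtilde lamhat : ℝ)
    (hlam : lam = Real.sqrt (g ⬝ᵥ (H⁻¹ *ᵥ g)))
    (hlamtilde : lamtilde = Real.sqrt ((Pᵀ *ᵥ g) ⬝ᵥ ((Pᵀ * H * P)⁻¹ *ᵥ (Pᵀ *ᵥ g))))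
    (hlamhat : lamhat = Real.sqrt ((Pᵀ *ᵥ g) ⬝ᵥ (Q⁻¹ *ᵥ (Pᵀ *ᵥ g))))
    (hlampos : 0 < lam) (hlamhatpos : 0 < lamhat)
    (μ : ℝ) (hμ0 : 0 < μ) (hμ1 : μ ≤ 1) (hμ : μ ≤ lamtilde / lam) :
    μ * Real.sqrt (σ ⟨N - 1, by omega⟩ / σ ⟨p, hpN⟩) * lam ≤ lamhat ∧
    lamhat ≤ lam ∧
    Real.sqrt (lam ^ 2 - lamhat ^ 2)
      ≤ Real.sqrt (1 - σ ⟨N - 1, by omega⟩ / σ ⟨p, hpN⟩ * μ ^ 2) * lam := by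
  have hNpos : 0 < N := by omega
  set iN : Fin N := ⟨N - 1, by omega⟩ with hiN
  set ip : Fin N := ⟨p, hpN⟩ with hip
  set R := Matrix.of u with hRdef
  set τ : Fin N → ℝ := fun i => if (i : ℕ) < p then σ i else σ ip with hτdef
  have hτpos : ∀ i, 0 < τ i := by
    intro i
    simp only [hτdef]
    by_cases hi : (i : ℕ) < p
    · rw [if_pos hi]; exact hσpos i
    · rw [if_neg hi]; exact hσpos ip
  have hστ : ∀ i, σ i ≤ τ i := by
    intro i
    simp only [hτdef]
    by_cases hi : (i : ℕ) < p
    · rw [if_pos hi]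
    · rw [if_neg hi]
      exact hσmono ip i (by rw [Fin.le_def]; simp [hip]; omega)
  -- injectivity of P and positive definiteness of Pᵀ H P
  have hPinj := aux_mulVec_inj hP
  have hHr : (Pᵀ * H * P).PosDef := by
    refine Matrix.PosDef.of_dotProduct_mulVec_pos ?_ ?_
    · have h := (hH.posSemidef.conjTranspose_mul_mul_same P).1
      rwa [Matrix.conjTranspose_eq_transpose_of_trivial] at h
    · intro x hx
      have hPx : P *ᵥ x ≠ 0 := fun h => hx (hPinj x h)
      have h2 := hH.dotProduct_mulVec_pos hPx
      simp only [star_trivial] at h2 ⊢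
      rwa [← Matrix.mulVec_mulVec, ← Matrix.mulVec_mulVec, Matrix.dotProduct_mulVec,
        Matrix.vecMul_transpose]
  -- spectral decompositions
  have hRR : R * Rᵀ = 1 := by
    ext i j
    simpa [hRdef, Matrix.mul_apply, Matrix.one_apply, dotProduct] using hortho i j
  have hHreq : Pᵀ * H * P = Rᵀ * Matrix.diagonal σ * R := aux_spectral hortho hHreig
  have hQeq : Q = Rᵀ * Matrix.diagonal τ * R := aux_spectral hortho (fun i => hQeig i)
  have hHrinv : (Pᵀ * H * P)⁻¹ = Rᵀ * Matrix.diagonal (fun i => (σ i)⁻¹) * R := by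
    rw [hHreq]; exact aux_inv hRR (fun i => (hσpos i).ne')
  have hQinv : Q⁻¹ = Rᵀ * Matrix.diagonal (fun i => (τ i)⁻¹) * R := by
    rw [hQeq]; exact aux_inv hRR (fun i => (hτpos i).ne')
  set v := Pᵀ *ᵥ g with hv
  set L := g ⬝ᵥ (H⁻¹ *ᵥ g) with hL
  set A := v ⬝ᵥ ((Pᵀ * H * P)⁻¹ *ᵥ v) with hAdef
  set B := v ⬝ᵥ (Q⁻¹ *ᵥ v) with hBdef
  have hA : A = ∑ i, (σ i)⁻¹ * ((R *ᵥ v) i) ^ 2 := by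
    rw [hAdef, hHrinv]; exact aux_quadform R _ v
  have hB : B = ∑ i, (τ i)⁻¹ * ((R *ᵥ v) i) ^ 2 := by
    rw [hBdef, hQinv]; exact aux_quadform R _ v
  have hA0 : 0 ≤ A := by
    rw [hA]
    exact Finset.sum_nonneg fun i _ => mul_nonneg (inv_nonneg.mpr (hσpos i).le) (sq_nonneg _)
  have hB0 : 0 ≤ B := by
    rw [hB]
    exact Finset.sum_nonneg fun i _ => mul_nonneg (inv_nonneg.mpr (hτpos i).le) (sq_nonneg _)
  have hL0 : 0 ≤ L := by
    have := hH.inv.posSemidef.dotProduct_mulVec_nonneg g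
    simpa [hL] using this
  have hAL : A ≤ L := aux_proj hH hHr g
  have hBA : B ≤ A := by
    rw [hA, hB]
    apply Finset.sum_le_sum
    intro i _
    apply mul_le_mul_of_nonneg_right _ (sq_nonneg _)
    exact inv_anti₀ (hσpos i) (hστ i)
  set r := σ iN / σ ip with hrdef
  have hr0 : 0 ≤ r := div_nonneg (hσpos iN).le (hσpos ip).le
  have hrA : r * A ≤ B := by
    rw [hA, hB, Finset.mul_sum]
    apply Finset.sum_le_sum
    intro i _
    rw [← mul_assoc]
    apply mul_le_mul_of_nonneg_right _ (sq_nonneg _)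
    rw [hrdef, ← div_eq_mul_inv, div_div, ← one_div,
      div_le_div_iff₀ (mul_pos (hσpos ip) (hσpos i)) (hτpos i), one_mul]
    by_cases hi : (i : ℕ) < p
    · have hτi : τ i = σ i := by simp only [hτdef]; rw [if_pos hi]
      rw [hτi]
      have h1 : σ iN ≤ σ ip := hσmono ip iN (by rw [Fin.le_def]; simp [hip, hiN]; omega)
      nlinarith [hσpos i, hσpos ip, hσpos iN]
    · have hτi : τ i = σ ip := by simp only [hτdef]; rw [if_neg hi]
      rw [hτi]
      have h1 : σ iN ≤ σ i := hσmono i iN (by rw [Fin.le_def]; simp [hiN]; omega)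
      nlinarith [hσpos i, hσpos ip, hσpos iN]
  -- scalar relations
  have hlam2 : lam ^ 2 = L := by rw [hlam, Real.sq_sqrt hL0]
  have hlamtilde2 : lamtilde ^ 2 = A := by rw [hlamtilde, Real.sq_sqrt hA0]
  have hlamhat2 : lamhat ^ 2 = B := by rw [hlamhat, Real.sq_sqrt hB0]
  have hmul : μ * lam ≤ lamtilde := (le_div_iff₀ hlampos).mp hμ
  have hmulam2 : μ ^ 2 * lam ^ 2 ≤ A := by
    have h := mul_self_le_mul_self (mul_nonneg hμ0.le hlampos.le) hmul
    calc μ ^ 2 * lam ^ 2 = (μ * lam) * (μ * lam) := by ring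
      _ ≤ lamtilde * lamtilde := h
      _ = A := by rw [← hlamtilde2]; ring
  have key1 : (μ * Real.sqrt r * lam) ^ 2 ≤ lamhat ^ 2 := by
    have he : (μ * Real.sqrt r * lam) ^ 2 = r * (μ ^ 2 * lam ^ 2) := by
      rw [mul_pow, mul_pow, Real.sq_sqrt hr0]; ring
    rw [he, hlamhat2]
    calc r * (μ ^ 2 * lam ^ 2) ≤ r * A := mul_le_mul_of_nonneg_left hmulam2 hr0
      _ ≤ B := hrA
  have g1 : μ * Real.sqrt r * lam ≤ lamhat := by
    have h := Real.sqrt_le_sqrt key1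
    rwa [Real.sqrt_sq (by positivity), Real.sqrt_sq hlamhatpos.le] at h
  have hhl : lamhat ^ 2 ≤ lam ^ 2 := by
    rw [hlamhat2, hlam2]; linarith
  have g2 : lamhat ≤ lam := by
    have h := Real.sqrt_le_sqrt hhl
    rwa [Real.sqrt_sq hlamhatpos.le, Real.sqrt_sq hlampos.le] at h
  have hrmu2 : r * μ ^ 2 * lam ^ 2 ≤ lamhat ^ 2 := by
    rw [hlamhat2]
    calc r * μ ^ 2 * lam ^ 2 = r * (μ ^ 2 * lam ^ 2) := by ring
      _ ≤ r * A := mul_le_mul_of_nonneg_left hmulam2 hr0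
      _ ≤ B := hrA
  have h1le : 0 ≤ 1 - r * μ ^ 2 := by
    have hlam2pos : 0 < lam ^ 2 := by positivity
    have h' : r * μ ^ 2 ≤ 1 := by
      have hh : (r * μ ^ 2) * lam ^ 2 ≤ 1 * lam ^ 2 := by
        rw [one_mul]; calc (r * μ ^ 2) * lam ^ 2 = r * μ ^ 2 * lam ^ 2 := by ring
          _ ≤ lamhat ^ 2 := hrmu2
          _ ≤ lam ^ 2 := hhl
      exact le_of_mul_le_mul_right hh hlam2pos
    linarith [h']
  have g3 : Real.sqrt (lam ^ 2 - lamhat ^ 2) ≤ Real.sqrt (1 - r * μ ^ 2) * lam := by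
    have key3 : lam ^ 2 - lamhat ^ 2 ≤ (1 - r * μ ^ 2) * lam ^ 2 := by
      have he : (1 - r * μ ^ 2) * lam ^ 2 = lam ^ 2 - r * μ ^ 2 * lam ^ 2 := by ring
      rw [he]; linarith [hrmu2]
    calc Real.sqrt (lam ^ 2 - lamhat ^ 2) ≤ Real.sqrt ((1 - r * μ ^ 2) * lam ^ 2) :=
          Real.sqrt_le_sqrt key3
      _ = Real.sqrt (1 - r * μ ^ 2) * lam := by
          rw [Real.sqrt_mul h1le, Real.sqrt_sq hlampos.le]
  exact ⟨g1, g2, g3⟩
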